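/- Let e_k ≥ 0 satisfy e_{k+1} ≤ η̄₀ e_k² + η̄₁ e_k + η̄₂ with η̄₀ = ρ_C^C(ρ_P^P+1)C₁/(2m), η̄₁ = ρ_C^C[ρ_P^P + h(ρ_P^P+1)(C₁C₀/m² + C₂/m)], η̄₂ ≥ 0. Suppose ρ_P^P ρ_C^C < τ < 1 and h ≤ h̄ := [(τ − ρ_C^C ρ_P^P)/(ρ_C^C(ρ_P^P+1))]·(C₁C₀/m² + C₂/m)⁻¹, and e₀ ≤ (τ − η̄₁)/η̄₀. Then, provided η̄₂/(1−τ) ≤ (τ − η̄₁)/η̄₀, we have e_k ≤ τᵏ e₀ + η̄₂(1−τᵏ)/(1−τ) for all k, hence limsup e_k ≤ η̄₂/(1−τ). -/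
import Mathlib


/-- Local `O(h²)` convergence of C-FOPC under Assumptions 1–2 (Theorem 2):
quadratic error recursion with attraction region. -/
theorem stmt_11 (e : ℕ → ℝ) (ρP ρC m L C₀ C₁ C₂ h τ η₂ : ℝ) (P C : ℕ)
    (hρP0 : 0 ≤ ρP) (hρP1 : ρP < 1) (hρC0 : 0 ≤ ρC) (hρC1 : ρC < 1)
    (hm : 0 < m) (hmL : m ≤ L) (hC₀ : 0 < C₀) (hC₁ : 0 < C₁) (hC₂ : 0 < C₂)
    (hh : 0 < h) (hτ0 : 0 < τ) (hτ1 : τ < 1) (hη₂ : 0 ≤ η₂)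
    (hpos : ∀ k, 0 ≤ e k)
    (hrec : ∀ k, e (k + 1) ≤
      (ρC ^ C * (ρP ^ P + 1) * C₁ / (2 * m)) * e k ^ 2 +
        (ρC ^ C * (ρP ^ P + h * (ρP ^ P + 1) * (C₁ * C₀ / m ^ 2 + C₂ / m))) * e k + η₂)
    (hτP : ρP ^ P * ρC ^ C < τ)
    (hhbar : h ≤ ((τ - ρC ^ C * ρP ^ P) / (ρC ^ C * (ρP ^ P + 1))) *
      (C₁ * C₀ / m ^ 2 + C₂ / m)⁻¹)
    (he0 : e 0 ≤ (τ - ρC ^ C * (ρP ^ P + h * (ρP ^ P + 1) * (C₁ * C₀ / m ^ 2 + C₂ / m))) /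
      (ρC ^ C * (ρP ^ P + 1) * C₁ / (2 * m)))
    (hattr : η₂ / (1 - τ) ≤
      (τ - ρC ^ C * (ρP ^ P + h * (ρP ^ P + 1) * (C₁ * C₀ / m ^ 2 + C₂ / m))) /
        (ρC ^ C * (ρP ^ P + 1) * C₁ / (2 * m))) :
    (∀ k, e k ≤ τ ^ k * e 0 + η₂ * (1 - τ ^ k) / (1 - τ)) ∧
      Filter.limsup e Filter.atTop ≤ η₂ / (1 - τ) := by
  have h1τ : (0:ℝ) < 1 - τ := by linarith
  set A : ℝ := ρC ^ C * (ρP ^ P + 1) * C₁ / (2 * m) with hA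
  set B : ℝ := ρC ^ C * (ρP ^ P + h * (ρP ^ P + 1) * (C₁ * C₀ / m ^ 2 + C₂ / m)) with hB
  set R : ℝ := (τ - B) / A with hR
  -- key inductive invariant
  have key : ∀ k, e k ≤ R ∧ e k ≤ τ ^ k * e 0 + η₂ * (1 - τ ^ k) / (1 - τ) := by
    have hη₂R : η₂ ≤ R * (1 - τ) := (div_le_iff₀ h1τ).mp hattr
    have hstep : ∀ k, e k ≤ R → e (k + 1) ≤ τ * e k + η₂ := by
      intro k hk
      rcases (pow_nonneg hρC0 C).eq_or_lt with hc | hc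
      · have hA0 : A = 0 := by rw [hA, ← hc]; ring
        have hB0 : B = 0 := by rw [hB, ← hc]; ring
        have := hrec k
        rw [hA0, hB0] at this
        nlinarith [hpos k, mul_nonneg hτ0.le (hpos k)]
      · have hApos : 0 < A := by
          apply div_pos _ (by linarith)
          have : (0:ℝ) < ρP ^ P + 1 := by positivity
          positivity
        have hAR : A * R = τ - B := by
          rw [hR]; field_simp
        have hAe : A * e k ≤ A * R := mul_le_mul_of_nonneg_left hk hApos.le
        nlinarith [hrec k, hpos k, mul_le_mul_of_nonneg_right hAe (hpos k)]
    intro k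
    induction k with
    | zero => exact ⟨he0, by norm_num⟩
    | succ k ih =>
      obtain ⟨h1, h2⟩ := ih
      have hs := hstep k h1
      constructor
      · nlinarith [mul_le_mul_of_nonneg_left h1 hτ0.le]
      · have heq : τ * (τ ^ k * e 0 + η₂ * (1 - τ ^ k) / (1 - τ)) + η₂ =
            τ ^ (k + 1) * e 0 + η₂ * (1 - τ ^ (k + 1)) / (1 - τ) := by
          rw [pow_succ]; field_simp; ring
        linarith [hs, heq, mul_le_mul_of_nonneg_left h2 hτ0.le]
  have hbound : ∀ k, e k ≤ τ ^ k * e 0 + η₂ * (1 - τ ^ k) / (1 - τ) := fun k => (key k).2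
  refine ⟨hbound, ?_⟩
  have h0 : Filter.Tendsto (fun k : ℕ => τ ^ k) Filter.atTop (nhds 0) :=
    tendsto_pow_atTop_nhds_zero_of_lt_one hτ0.le hτ1
  have htend : Filter.Tendsto (fun k : ℕ => τ ^ k * e 0 + η₂ * (1 - τ ^ k) / (1 - τ))
      Filter.atTop (nhds (η₂ / (1 - τ))) := by
    have : Filter.Tendsto (fun k : ℕ => τ ^ k * e 0 + η₂ * (1 - τ ^ k) / (1 - τ))
        Filter.atTop (nhds (0 * e 0 + η₂ * (1 - 0) / (1 - τ))) :=
      (h0.mul_const _).add (((tendsto_const_nhds.sub h0).const_mul η₂).div_const _)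
    simpa using this
  calc Filter.limsup e Filter.atTop
      ≤ Filter.limsup (fun k : ℕ => τ ^ k * e 0 + η₂ * (1 - τ ^ k) / (1 - τ))
        Filter.atTop := by
        exact Filter.limsup_le_limsup (Filter.Eventually.of_forall hbound)
          (Filter.isCoboundedUnder_le_of_le _ hpos) htend.isBoundedUnder_le
    _ = η₂ / (1 - τ) := htend.limsup_eq
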